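/- The radius of convergence of any opposite series a(s) ∈ Ω(P) of a tame power series P is at least 1/sup{|z| : z ∈ Ω₁(P)}, where Ω₁(P) is the accumulation set of the sequence γ_{n−1}/γ_n. -/

import Mathlib

open Filter

/-- Tameness of a coefficient sequence: `γ n ≠ 0` and `u ≤ |γ (n-1) / γ n| ≤ v`
    for all `n ≥ N`. -/
def Tame (γ : ℕ → ℂ) (u v : ℝ) (N : ℕ) : Prop :=
  0 < u ∧ 0 < v ∧ (∀ n ≥ N, γ n ≠ 0) ∧
    ∀ n ≥ N + 1, u ≤ ‖γ (n - 1) / γ n‖ ∧ ‖γ (n - 1) / γ n‖ ≤ v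

/-- The opposite polynomial `X_n(P) = ∑_{k=0}^n (γ_{n-k}/γ_n) s^k`, viewed as its
    coefficient sequence in `ℂ[[s]] ≅ (ℕ → ℂ)` with the product topology. -/
noncomputable def oppPoly (γ : ℕ → ℂ) (n : ℕ) : ℕ → ℂ :=
  fun k => if k ≤ n then γ (n - k) / γ n else 0

/-- The space `Ω(P)` of opposite series: the set of cluster points of the sequence
    of opposite polynomials in the coefficientwise (product) topology. -/
def OmegaP (γ : ℕ → ℂ) : Set (ℕ → ℂ) :=
  {a | MapClusterPt a atTop (oppPoly γ)}


/-- The set `Ω₁(P)` of accumulation values of the ratios `γ_{n-1}/γ_n`. -/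
def Omega1 (γ : ℕ → ℂ) : Set ℂ :=
  {z | MapClusterPt z atTop (fun n => γ (n - 1) / γ n)}

/-- A cluster point of a sequence eventually bounded in norm by `B` has norm `≤ B`. -/
lemma clusterPt_norm_le {f : ℕ → ℂ} {x : ℂ} {B : ℝ}
    (hx : MapClusterPt x atTop f) (hB : ∀ᶠ n in atTop, ‖f n‖ ≤ B) : ‖x‖ ≤ B := by
  have hC : IsClosed {y : ℂ | ‖y‖ ≤ B} := isClosed_le continuous_norm continuous_const
  have hle : map f atTop ≤ 𝓟 {y : ℂ | ‖y‖ ≤ B} := le_principal_iff.2 (mem_map.2 hB)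
  have : x ∈ closure {y : ℂ | ‖y‖ ≤ B} :=
    mem_closure_iff_clusterPt.2 (hx.clusterPt.mono hle)
  rwa [hC.closure_eq] at this

/-- Every opposite series converges (at least) on the open disc of radius
    `1 / sup {|z| : z ∈ Ω₁(P)}`. -/
theorem opposite_series_radius (γ : ℕ → ℂ) (u v : ℝ) (N : ℕ) (h : Tame γ u v N)
    (a : ℕ → ℂ) (ha : a ∈ OmegaP γ) (z : ℂ)
    (hz : ‖z‖ < 1 / sSup ((fun w => ‖w‖) '' Omega1 γ)) :
    Summable (fun k => a k * z ^ k) := by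
  obtain ⟨hu, hv, hne, hbd⟩ := h
  set S : ℝ := sSup ((fun w => ‖w‖) '' Omega1 γ) with hSdef
  have hS0 : 0 < S := one_div_pos.mp ((norm_nonneg z).trans_lt hz)
  have hzS : ‖z‖ * S < 1 := (lt_div_iff₀ hS0).mp hz
  -- every element of Ω₁ has norm ≤ v
  have hOm1 : ∀ w ∈ Omega1 γ, ‖w‖ ≤ v := by
    intro w hw
    refine clusterPt_norm_le hw ?_
    filter_upwards [eventually_ge_atTop (N + 1)] with n hn
    exact (hbd n hn).2
  have hbdd : BddAbove ((fun w => ‖w‖) '' Omega1 γ) := by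
    refine ⟨v, ?_⟩
    rintro _ ⟨w, hw, rfl⟩
    exact hOm1 w hw
  -- choose ε
  set ε : ℝ := (1 - ‖z‖ * S) / (2 * (‖z‖ + 1)) with hεdef
  have hz1 : (0:ℝ) < ‖z‖ + 1 := by positivity
  have hε : 0 < ε := by
    apply div_pos <;> nlinarith
  have hr1 : (S + ε) * ‖z‖ < 1 := by
    have : ε * (‖z‖ + 1) = (1 - ‖z‖ * S) / 2 := by
      rw [hεdef, div_mul_eq_mul_div, div_eq_div_iff (by positivity) (by norm_num)]; ring
    nlinarith [norm_nonneg z]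
  -- eventually the ratios have norm ≤ S + ε
  have hev : ∀ᶠ n in atTop, ‖γ (n - 1) / γ n‖ ≤ S + ε := by
    by_contra hcon
    rw [not_eventually] at hcon
    push_neg at hcon
    set K : Set ℂ := {w | S + ε ≤ ‖w‖ ∧ ‖w‖ ≤ v} with hKdef
    have hfreq : ∃ᶠ n in atTop, (γ (n - 1) / γ n) ∈ K := by
      refine (hcon.and_eventually (eventually_ge_atTop (N + 1))).mono ?_
      intro n ⟨h1, h2⟩
      exact ⟨h1.le, (hbd n h2).2⟩
    have hKsub : K ⊆ Metric.closedBall (0:ℂ) v := by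
      intro w hw
      simpa [Metric.mem_closedBall, dist_eq_norm] using hw.2
    have hKclosed : IsClosed K :=
      (isClosed_le continuous_const continuous_norm).inter
        (isClosed_le continuous_norm continuous_const)
    have hKcomp : IsCompact K :=
      (isCompact_closedBall (0:ℂ) v).of_isClosed_subset hKclosed hKsub
    have hNB : NeBot (map (fun n => γ (n - 1) / γ n) atTop ⊓ 𝓟 K) := by
      rw [← frequently_mem_iff_neBot]
      rwa [frequently_map]
    obtain ⟨w, hwK, hwc⟩ := hKcomp.exists_clusterPt (f := map (fun n => γ (n - 1) / γ n) atTop ⊓ 𝓟 K) inf_le_right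
    have hwOm : w ∈ Omega1 γ := hwc.mono inf_le_left
    have : ‖w‖ ≤ S := le_csSup hbdd ⟨w, hwOm, rfl⟩
    have := hwK.1
    linarith
  obtain ⟨M, hM⟩ := eventually_atTop.mp hev
  set M' : ℕ := max M (N + 1) with hM'def
  -- the key telescoping bound
  have hkey : ∀ k n, M' + k ≤ n → ‖γ (n - k) / γ n‖ ≤ (S + ε) ^ k := by
    intro k
    induction k with
    | zero =>
      intro n hn
      have hn0 : γ n ≠ 0 := hne n (by omega)
      simp [div_self hn0]
    | succ k ih =>
      intro n hn
      have hb : γ (n - k) ≠ 0 := hne (n - k) (by omega)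
      have heq : γ (n - (k + 1)) / γ n =
          (γ (n - (k + 1)) / γ (n - k)) * (γ (n - k) / γ n) := by
        rw [div_mul_div_comm, mul_comm (γ (n - (k+1))) (γ (n - k)),
          mul_div_mul_left _ _ hb]
      rw [heq, norm_mul]
      have h1 : ‖γ (n - (k + 1)) / γ (n - k)‖ ≤ S + ε := by
        have : n - (k + 1) = (n - k) - 1 := by omega
        rw [this]
        exact hM (n - k) (by omega)
      have h2 : ‖γ (n - k) / γ n‖ ≤ (S + ε) ^ k := ih n (by omega)
      calc ‖γ (n - (k + 1)) / γ (n - k)‖ * ‖γ (n - k) / γ n‖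
          ≤ (S + ε) * (S + ε) ^ k :=
            mul_le_mul h1 h2 (norm_nonneg _) (by positivity)
        _ = (S + ε) ^ (k + 1) := (pow_succ' _ _).symm
  -- coefficient bound
  have hak : ∀ k, ‖a k‖ ≤ (S + ε) ^ k := by
    intro k
    have hk : MapClusterPt (a k) atTop (fun n => oppPoly γ n k) :=
      MapClusterPt.continuousAt_comp (continuous_apply k).continuousAt ha
    refine clusterPt_norm_le hk ?_
    filter_upwards [eventually_ge_atTop (M' + k)] with n hn
    have hkn : k ≤ n := by omega
    simpa [oppPoly, hkn] using hkey k n hn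
  -- conclude by comparison with a geometric series
  refine Summable.of_norm_bounded
    (summable_geometric_of_lt_one (by positivity) hr1) ?_
  intro k
  simp only [norm_mul, norm_pow, mul_pow]
  exact mul_le_mul_of_nonneg_right (hak k) (by positivity)
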